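/- arXiv:0905.2713 — 3 statements merged into one kernel-verified Lean document; each statement's English description precedes it below -/
import Mathlib

section
/- Let n ≥ 2 and fix the standard free generating set x_1, …, x_n of the free group F_n. There exists a polynomial p_n with natural-number (or integer) coefficients, depending only on n, such that for every element w of F_n there is an automorphism α of F_n and an index i ∈ {1,…,n} such that the exponent sum of the generator x_i in α(w) is zero and the reduced word length satisfies ℓ(α(w)) ≤ p_n(ℓ(w)). -/
/-- The exponent-sum homomorphism `F_n → ℤ` (written multiplicatively) sending the
generator `x_i` to `1` and all other generators to `0`. -/
def expSum {n : ℕ} (i : Fin n) : FreeGroup (Fin n) →* Multiplicative ℤ :=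
  FreeGroup.lift fun j => Multiplicative.ofAdd (if j = i then (1 : ℤ) else 0)

namespace ExpSumAux

open FreeGroup Multiplicative

variable {n : ℕ}

lemma expSum_of (i j : Fin n) :
    expSum i (of j) = ofAdd (if j = i then (1 : ℤ) else 0) :=
  FreeGroup.lift_apply_of

/-- Generic Lipschitz bound for endomorphisms of the free group. -/
lemma norm_hom_le (φ : FreeGroup (Fin n) →* FreeGroup (Fin n)) (C : ℕ)
    (h : ∀ j, (φ (of j)).norm ≤ C) (w : FreeGroup (Fin n)) :
    (φ w).norm ≤ C * w.norm := by
  have key : ∀ L : List (Fin n × Bool), (φ (mk L)).norm ≤ C * L.length := by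
    intro L
    induction L with
    | nil =>
        have h0 : (mk ([] : List (Fin n × Bool))) = (1 : FreeGroup (Fin n)) := rfl
        simp [h0, FreeGroup.norm_one]
    | cons x L ih =>
        have h1 : mk (x :: L) = mk [x] * mk L := by
          rw [FreeGroup.mul_mk]; rfl
        have h2 : (φ (mk [x])).norm ≤ C := by
          rcases x with ⟨j, b⟩
          cases b with
          | true => exact h j
          | false =>
              have : (mk [((j : Fin n), false)]) = (of j)⁻¹ := by
                rw [show (of j : FreeGroup (Fin n)) = mk [(j, true)] from rfl,
                  FreeGroup.inv_mk]
                rfl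
              rw [this, _root_.map_inv, FreeGroup.norm_inv_eq]
              exact h j
        calc (φ (mk (x :: L))).norm = (φ (mk [x]) * φ (mk L)).norm := by rw [h1, _root_.map_mul]
          _ ≤ (φ (mk [x])).norm + (φ (mk L)).norm := FreeGroup.norm_mul_le _ _
          _ ≤ C + C * L.length := Nat.add_le_add h2 ih
          _ = C * (x :: L).length := by simp [List.length_cons]; ring
  have := key w.toWord
  rwa [FreeGroup.mk_toWord] at this

lemma expSum_natAbs_le (i : Fin n) (w : FreeGroup (Fin n)) :
    (toAdd (expSum i w)).natAbs ≤ w.norm := by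
  have key : ∀ L : List (Fin n × Bool),
      (toAdd (expSum i (mk L))).natAbs ≤ L.length := by
    intro L
    induction L with
    | nil =>
        have h0 : (mk ([] : List (Fin n × Bool))) = (1 : FreeGroup (Fin n)) := rfl
        simp [h0]
    | cons x L ih =>
        have h1 : mk (x :: L) = mk [x] * mk L := by
          rw [FreeGroup.mul_mk]; rfl
        have h2 : (toAdd (expSum i (mk [x]))).natAbs ≤ 1 := by
          rcases x with ⟨j, b⟩
          cases b with
          | true =>
              rw [show (mk [((j : Fin n), true)]) = of j from rfl, expSum_of]
              split <;> simp
          | false =>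
              have : (mk [((j : Fin n), false)]) = (of j)⁻¹ := by
                rw [show (of j : FreeGroup (Fin n)) = mk [(j, true)] from rfl,
                  FreeGroup.inv_mk]
                rfl
              rw [this, _root_.map_inv, expSum_of]
              split <;> simp
        rw [h1, _root_.map_mul, toAdd_mul]
        calc ((toAdd (expSum i (mk [x]))) + toAdd (expSum i (mk L))).natAbs
            ≤ (toAdd (expSum i (mk [x]))).natAbs + (toAdd (expSum i (mk L))).natAbs :=
              Int.natAbs_add_le _ _
          _ ≤ 1 + L.length := Nat.add_le_add h2 ih
          _ = (x :: L).length := by simp [List.length_cons, Nat.add_comm]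
  have := key w.toWord
  rwa [FreeGroup.mk_toWord] at this

/-- Balanced division. -/
lemma exists_balanced (a b : ℤ) (hb : b ≠ 0) :
    ∃ k r : ℤ, a + k * b = r ∧ 2 * r.natAbs ≤ b.natAbs := by
  set m : ℤ := (b.natAbs : ℤ) with hm
  have hm0 : 0 < m := by
    simp only [hm]
    exact_mod_cast Int.natAbs_pos.mpr hb
  have hsb : b.sign * b = m := by
    rw [hm]
    rcases lt_trichotomy b 0 with h | h | h
    · rw [Int.sign_eq_neg_one_of_neg h]; omega
    · exact absurd h hb
    · rw [Int.sign_eq_one_of_pos h]; omega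
  have hr0 : 0 ≤ a % m := Int.emod_nonneg a (ne_of_gt hm0)
  have hr1 : a % m < m := Int.emod_lt_of_pos a hm0
  have hdiv : a - (a / m) * m = a % m := by
    rw [Int.emod_def]; ring
  by_cases hc : 2 * (a % m) ≤ m
  · refine ⟨-(a / m) * b.sign, a % m, ?_, ?_⟩
    · have : -(a / m) * b.sign * b = -(a / m) * m := by
        rw [mul_assoc, hsb]
      rw [this]; linarith [hdiv]
    · omega
  · refine ⟨(-(a / m) - 1) * b.sign, a % m - m, ?_, ?_⟩
    · have : (-(a / m) - 1) * b.sign * b = (-(a / m) - 1) * m := by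
        rw [mul_assoc, hsb]
      rw [this]; linarith [hdiv]
    · omega

/-- The key numeric inequality. -/
lemma keyineq (A B K R : ℕ) (h1 : 1 ≤ B) (h2 : B ≤ A) (h3 : 2 * R ≤ B)
    (h4 : K * B ≤ A + B) :
    (1 + K) * ((B + 1) * (R + 1) ^ 7) ≤ (A + 1) * (B + 1) ^ 7 := by
  have hpos : 0 < 4 ^ 7 * B := by positivity
  refine Nat.le_of_mul_le_mul_right ?_ hpos
  have e1 : (1 + K) * B ≤ 3 * A := by nlinarith
  have e2 : 4 * (R + 1) ≤ 3 * (B + 1) := by omega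
  have e3 : (4 * (R + 1)) ^ 7 ≤ (3 * (B + 1)) ^ 7 := Nat.pow_le_pow_left e2 7
  have e4 : A * (B + 1) ≤ 2 * (A * B) := by nlinarith
  calc (1 + K) * ((B + 1) * (R + 1) ^ 7) * (4 ^ 7 * B)
      = ((1 + K) * B) * ((B + 1) * (4 * (R + 1)) ^ 7) := by ring
    _ ≤ (3 * A) * ((B + 1) * (3 * (B + 1)) ^ 7) :=
        Nat.mul_le_mul e1 (Nat.mul_le_mul_left _ e3)
    _ = 6561 * (A * (B + 1)) * (B + 1) ^ 7 := by ring
    _ ≤ 6561 * (2 * (A * B)) * (B + 1) ^ 7 :=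
        Nat.mul_le_mul_right _ (Nat.mul_le_mul_left _ e4)
    _ = 13122 * (A * B) * (B + 1) ^ 7 := by ring
    _ ≤ 16384 * ((A + 1) * B) * (B + 1) ^ 7 :=
        Nat.mul_le_mul_right _
          (Nat.mul_le_mul (by norm_num) (Nat.mul_le_mul_right _ (Nat.le_succ A)))
    _ = (A + 1) * (B + 1) ^ 7 * (4 ^ 7 * B) := by ring

section Tau

variable (i0 i1 : Fin n)

/-- The Nielsen transformation `x_{i1} ↦ x_{i1} x_{i0}^k`. -/
def tauF (k : ℤ) : FreeGroup (Fin n) →* FreeGroup (Fin n) :=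
  FreeGroup.lift fun j => if j = i1 then of i1 * of i0 ^ k else of j

lemma tauF_of (k : ℤ) (j : Fin n) :
    tauF i0 i1 k (of j) = if j = i1 then of i1 * of i0 ^ k else of j :=
  FreeGroup.lift_apply_of

lemma tauF_comp (hne : i0 ≠ i1) (k : ℤ) :
    (tauF i0 i1 k).comp (tauF i0 i1 (-k)) = MonoidHom.id _ := by
  apply FreeGroup.ext_hom
  intro j
  simp only [MonoidHom.comp_apply, MonoidHom.id_apply, tauF_of]
  by_cases hj : j = i1
  · subst hj
    rw [if_pos rfl, _root_.map_mul, _root_.map_zpow, tauF_of, tauF_of, if_pos rfl, if_neg hne]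
    group
  · rw [if_neg hj, tauF_of, if_neg hj]

/-- `tauF` as an automorphism. -/
def tauE (hne : i0 ≠ i1) (k : ℤ) : FreeGroup (Fin n) ≃* FreeGroup (Fin n) :=
  MonoidHom.toMulEquiv (tauF i0 i1 k) (tauF i0 i1 (-k))
    (by have := tauF_comp i0 i1 hne (-k); rwa [neg_neg] at this)
    (tauF_comp i0 i1 hne k)

lemma tauE_apply (hne : i0 ≠ i1) (k : ℤ) (w : FreeGroup (Fin n)) :
    tauE i0 i1 hne k w = tauF i0 i1 k w := rfl

lemma norm_zpow_of_le (j : Fin n) (k : ℤ) : ((of j : FreeGroup (Fin n)) ^ k).norm ≤ k.natAbs := by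
  rcases k with m | m
  · rw [Int.ofNat_eq_coe, zpow_natCast, FreeGroup.norm_of_pow]
    simp
  · rw [zpow_negSucc, FreeGroup.norm_inv_eq, FreeGroup.norm_of_pow]
    simp

lemma norm_tauF_le (k : ℤ) (w : FreeGroup (Fin n)) :
    (tauF i0 i1 k w).norm ≤ (1 + k.natAbs) * w.norm := by
  apply norm_hom_le
  intro j
  rw [tauF_of]
  by_cases hj : j = i1
  · rw [if_pos hj]
    calc (of i1 * of i0 ^ k).norm ≤ (of i1).norm + ((of i0 : FreeGroup (Fin n)) ^ k).norm :=
          FreeGroup.norm_mul_le _ _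
      _ ≤ 1 + k.natAbs := Nat.add_le_add (le_of_eq (FreeGroup.norm_of _)) (norm_zpow_of_le _ _)
  · rw [if_neg hj, FreeGroup.norm_of]
    omega

lemma expSum_tauF_i0 (hne : i0 ≠ i1) (k : ℤ) (w : FreeGroup (Fin n)) :
    toAdd (expSum i0 (tauF i0 i1 k w)) =
      toAdd (expSum i0 w) + k * toAdd (expSum i1 w) := by
  induction w using FreeGroup.induction_on with
  | C1 => simp
  | of j =>
      show toAdd (expSum i0 (tauF i0 i1 k (of j))) =
        toAdd (expSum i0 (of j)) + k * toAdd (expSum i1 (of j))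
      rw [tauF_of]
      by_cases hj : j = i1
      · subst hj
        rw [if_pos rfl, _root_.map_mul, _root_.map_zpow, toAdd_mul, toAdd_zpow, expSum_of, expSum_of,
          expSum_of, if_neg (Ne.symm hne), if_pos rfl, if_pos rfl]
        simp
      · rw [if_neg hj]
        simp [expSum_of, hj]
  | inv_of j ih =>
      simp only [_root_.map_inv, toAdd_inv]
      linarith [ih]
  | mul x y ihx ihy =>
      simp only [_root_.map_mul, toAdd_mul]
      linarith [ihx, ihy]

lemma expSum_tauF_i1 (hne : i0 ≠ i1) (k : ℤ) (w : FreeGroup (Fin n)) :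
    expSum i1 (tauF i0 i1 k w) = expSum i1 w := by
  have : (expSum i1).comp (tauF i0 i1 k) = expSum i1 := by
    apply FreeGroup.ext_hom
    intro j
    simp only [MonoidHom.comp_apply, tauF_of]
    by_cases hj : j = i1
    · subst hj
      rw [if_pos rfl, _root_.map_mul, _root_.map_zpow, expSum_of, expSum_of, if_pos rfl,
        if_neg hne]
      simp
    · rw [if_neg hj]
  exact DFunLike.congr_fun this w

end Tau

section Swap

variable (i0 i1 : Fin n)

lemma expSum_swap (w : FreeGroup (Fin n)) (i : Fin n) :
    expSum i (freeGroupCongr (Equiv.swap i0 i1) w) = expSum ((Equiv.swap i0 i1) i) w := by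
  have hiff : ∀ j : Fin n, ((Equiv.swap i0 i1) j = i ↔ j = (Equiv.swap i0 i1) i) := by
    intro j
    constructor
    · intro h; rw [← h, Equiv.swap_apply_self]
    · intro h; rw [h, Equiv.swap_apply_self]
  induction w using FreeGroup.induction_on with
  | C1 => simp
  | of j =>
      show expSum i (freeGroupCongr (Equiv.swap i0 i1) (of j)) = expSum ((Equiv.swap i0 i1) i) (of j)
      rw [show (freeGroupCongr (Equiv.swap i0 i1)) (of j) = of ((Equiv.swap i0 i1) j) from by
        simp [freeGroupCongr_apply, FreeGroup.map.of]]
      rw [expSum_of, expSum_of]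
      exact congrArg Multiplicative.ofAdd (if_congr (hiff j) rfl rfl)
  | inv_of j ih =>
      simp only [_root_.map_inv]
      rw [ih]
  | mul x y ihx ihy =>
      simp only [_root_.map_mul]
      rw [ihx, ihy]

lemma norm_swap_le (w : FreeGroup (Fin n)) :
    (freeGroupCongr (Equiv.swap i0 i1) w).norm ≤ w.norm := by
  have := norm_hom_le ((freeGroupCongr (Equiv.swap i0 i1) :
      FreeGroup (Fin n) →* FreeGroup (Fin n))) 1 ?_ w
  · simpa using this
  · intro j
    simp [FreeGroup.map.of, FreeGroup.norm_of]

end Swap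

/-- Main inductive lemma: Euclidean algorithm via Nielsen transformations. -/
lemma main_aux (i0 i1 : Fin n) (hne : i0 ≠ i1) :
    ∀ B : ℕ, ∀ (w : FreeGroup (Fin n)) (a b : ℤ),
      toAdd (expSum i0 w) = a → toAdd (expSum i1 w) = b →
      b.natAbs = B → b.natAbs ≤ a.natAbs →
      ∃ (α : FreeGroup (Fin n) ≃* FreeGroup (Fin n)) (i : Fin n),
        expSum i (α w) = 1 ∧
        (α w).norm ≤ w.norm * ((a.natAbs + 1) * (b.natAbs + 1) ^ 7) := by
  intro B
  induction B using Nat.strong_induction_on with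
  | _ B IH =>
    intro w a b ha hb hB hle
    by_cases hb0 : b = 0
    · refine ⟨MulEquiv.refl _, i1, ?_, ?_⟩
      · show expSum i1 w = 1
        have : toAdd (expSum i1 w) = 0 := by rw [hb, hb0]
        have := congrArg Multiplicative.ofAdd this
        simpa using this
      · show w.norm ≤ w.norm * ((a.natAbs + 1) * (b.natAbs + 1) ^ 7)
        have h1 : 0 < (a.natAbs + 1) * (b.natAbs + 1) ^ 7 := by positivity
        calc w.norm = w.norm * 1 := (Nat.mul_one _).symm
          _ ≤ w.norm * ((a.natAbs + 1) * (b.natAbs + 1) ^ 7) :=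
              Nat.mul_le_mul_left _ h1
    · obtain ⟨k, r, hkr, hr2⟩ := exists_balanced a b hb0
      set w1 := tauE i0 i1 hne k w with hw1
      set u := freeGroupCongr (Equiv.swap i0 i1) w1 with hu
      have hu0 : toAdd (expSum i0 u) = b := by
        rw [hu, expSum_swap, Equiv.swap_apply_left, hw1, tauE_apply,
          expSum_tauF_i1 i0 i1 hne, hb]
      have hu1 : toAdd (expSum i1 u) = r := by
        rw [hu, expSum_swap, Equiv.swap_apply_right, hw1, tauE_apply,
          expSum_tauF_i0 i0 i1 hne, ha, hb]
        exact hkr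
      have hBpos : 1 ≤ b.natAbs := by omega
      have hrb : r.natAbs < B := by omega
      have hrble : r.natAbs ≤ b.natAbs := by omega
      obtain ⟨α', i, hα'1, hα'2⟩ := IH r.natAbs hrb u b r hu0 hu1 rfl hrble
      refine ⟨(tauE i0 i1 hne k).trans ((freeGroupCongr (Equiv.swap i0 i1)).trans α'), i, ?_, ?_⟩
      · exact hα'1
      · show (α' u).norm ≤ w.norm * ((a.natAbs + 1) * (b.natAbs + 1) ^ 7)
        have hnu : u.norm ≤ (1 + k.natAbs) * w.norm := by
          calc u.norm ≤ w1.norm := norm_swap_le i0 i1 w1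
            _ ≤ (1 + k.natAbs) * w.norm := norm_tauF_le i0 i1 k w
        have hkb : k.natAbs * b.natAbs ≤ a.natAbs + b.natAbs := by
          calc k.natAbs * b.natAbs = (k * b).natAbs := (Int.natAbs_mul k b).symm
            _ = (r - a).natAbs := by rw [show k * b = r - a from by linarith]
            _ ≤ r.natAbs + a.natAbs := Int.natAbs_sub_le r a
            _ ≤ a.natAbs + b.natAbs := by omega
        have key := keyineq a.natAbs b.natAbs k.natAbs r.natAbs hBpos hle hr2 hkb
        calc (α' u).norm ≤ u.norm * ((b.natAbs + 1) * (r.natAbs + 1) ^ 7) := hα'2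
          _ ≤ ((1 + k.natAbs) * w.norm) * ((b.natAbs + 1) * (r.natAbs + 1) ^ 7) :=
              Nat.mul_le_mul_right _ hnu
          _ = w.norm * ((1 + k.natAbs) * ((b.natAbs + 1) * (r.natAbs + 1) ^ 7)) := by ring
          _ ≤ w.norm * ((a.natAbs + 1) * (b.natAbs + 1) ^ 7) := Nat.mul_le_mul_left _ key

end ExpSumAux

/-- For each `n ≥ 2` there is a polynomial `p_n` (depending only on `n`) such that every
`w ∈ F_n` can be carried by an automorphism `α` of `F_n` to a word with zero exponent sum
in some generator and of length at most `p_n(ℓ(w))`. -/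
theorem exists_automorphism_zero_expSum_poly_bound (n : ℕ) (hn : 2 ≤ n) :
    ∃ p : Polynomial ℕ, ∀ w : FreeGroup (Fin n),
      ∃ (α : FreeGroup (Fin n) ≃* FreeGroup (Fin n)) (i : Fin n),
        expSum i (α w) = 1 ∧ (α w).norm ≤ p.eval w.norm := by
  classical
  open ExpSumAux FreeGroup Multiplicative in
  refine ⟨Polynomial.X * (Polynomial.X + 1) ^ 8, ?_⟩
  intro w
  have heval : (Polynomial.X * (Polynomial.X + 1) ^ 8 : Polynomial ℕ).eval w.norm
      = w.norm * (w.norm + 1) ^ 8 := by simp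
  set i0 : Fin n := ⟨0, by omega⟩
  set i1 : Fin n := ⟨1, by omega⟩
  have hne : i0 ≠ i1 := by
    intro h
    have : (0 : ℕ) = 1 := congrArg Fin.val h
    omega
  set a : ℤ := toAdd (expSum i0 w)
  set b : ℤ := toAdd (expSum i1 w)
  have hA : a.natAbs ≤ w.norm := expSum_natAbs_le i0 w
  have hB : b.natAbs ≤ w.norm := expSum_natAbs_le i1 w
  rw [heval]
  by_cases hc : b.natAbs ≤ a.natAbs
  · obtain ⟨α, i, h1, h2⟩ := main_aux i0 i1 hne b.natAbs w a b rfl rfl rfl hc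
    refine ⟨α, i, h1, le_trans h2 ?_⟩
    apply Nat.mul_le_mul_left
    calc (a.natAbs + 1) * (b.natAbs + 1) ^ 7
        ≤ (w.norm + 1) * (w.norm + 1) ^ 7 :=
          Nat.mul_le_mul (by omega) (Nat.pow_le_pow_left (by omega) 7)
      _ = (w.norm + 1) ^ 8 := by ring
  · set u := FreeGroup.freeGroupCongr (Equiv.swap i0 i1) w with hu
    have hu0 : toAdd (expSum i0 u) = b := by
      rw [hu, expSum_swap, Equiv.swap_apply_left]
    have hu1 : toAdd (expSum i1 u) = a := by
      rw [hu, expSum_swap, Equiv.swap_apply_right]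
    obtain ⟨α, i, h1, h2⟩ := main_aux i0 i1 hne a.natAbs u b a hu0 hu1 rfl (by omega)
    refine ⟨(FreeGroup.freeGroupCongr (Equiv.swap i0 i1)).trans α, i, h1, ?_⟩
    show (α u).norm ≤ w.norm * (w.norm + 1) ^ 8
    have hnu : u.norm ≤ w.norm := norm_swap_le i0 i1 w
    calc (α u).norm ≤ u.norm * ((b.natAbs + 1) * (a.natAbs + 1) ^ 7) := h2
      _ ≤ w.norm * ((w.norm + 1) * (w.norm + 1) ^ 7) := by
          apply Nat.mul_le_mul hnu
          exact Nat.mul_le_mul (by omega) (Nat.pow_le_pow_left (by omega) 7)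
      _ = w.norm * (w.norm + 1) ^ 8 := by ring
end

section
/- There exists a single polynomial p with natural-number (or integer) coefficients such that for every n ≥ 2 and every element w of the free group F_n, there is an automorphism α of F_n and an index i ∈ {1,…,n} such that the exponent sum of the generator x_i in α(w) is zero and ℓ(α(w)) ≤ p(ℓ(w)). That is, the polynomial in the main theorem can be chosen universally, independently of the rank n. -/
set_option linter.unusedTactic false
set_option linter.unreachableTactic false

namespace EuclidAux
variable {n : ℕ}

/-- Additive exponent sum. -/
def E (i : Fin n) (w : FreeGroup (Fin n)) : ℤ := Multiplicative.toAdd (expSum i w)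

@[simp] lemma E_one (i : Fin n) : E i 1 = 0 := by simp [E]
@[simp] lemma E_mul (i : Fin n) (u v : FreeGroup (Fin n)) : E i (u * v) = E i u + E i v := by
  simp [E, map_mul]
@[simp] lemma E_inv (i : Fin n) (u : FreeGroup (Fin n)) : E i u⁻¹ = - E i u := by
  simp [E, map_inv]
@[simp] lemma E_of (i j : Fin n) : E i (FreeGroup.of j) = if j = i then 1 else 0 := by
  simp [E, expSum, FreeGroup.lift_apply_of]
@[simp] lemma E_zpow (i : Fin n) (u : FreeGroup (Fin n)) (k : ℤ) : E i (u ^ k) = k * E i u := by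
  simp [E, map_zpow]

lemma pure_eq_of (j : Fin n) : (pure j : FreeGroup (Fin n)) = FreeGroup.of j := rfl

/-- Nielsen hom: `x_{i0} ↦ x_{i0} x_{i1}^k`, other generators fixed. -/
def nu (i0 i1 : Fin n) (k : ℤ) : FreeGroup (Fin n) →* FreeGroup (Fin n) :=
  FreeGroup.lift fun j => if j = i0 then FreeGroup.of i0 * FreeGroup.of i1 ^ k else FreeGroup.of j

lemma nu_of (i0 i1 : Fin n) (k : ℤ) (j : Fin n) :
    nu i0 i1 k (FreeGroup.of j)
      = if j = i0 then FreeGroup.of i0 * FreeGroup.of i1 ^ k else FreeGroup.of j :=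
  FreeGroup.lift_apply_of

lemma nu_comp (i0 i1 : Fin n) (h : i0 ≠ i1) (k : ℤ) :
    (nu i0 i1 (-k)).comp (nu i0 i1 k) = MonoidHom.id _ := by
  refine FreeGroup.ext_hom _ _ fun j => ?_
  by_cases hj : j = i0
  · subst hj
    simp [nu_of, h.symm, map_mul, map_zpow, mul_assoc]
  · simp [nu_of, hj]

/-- Nielsen automorphism. -/
def nuE (i0 i1 : Fin n) (h : i0 ≠ i1) (k : ℤ) :
    FreeGroup (Fin n) ≃* FreeGroup (Fin n) :=
  MonoidHom.toMulEquiv (nu i0 i1 k) (nu i0 i1 (-k)) (nu_comp i0 i1 h k)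
    (by simpa using nu_comp i0 i1 h (-k))

@[simp] lemma nuE_apply (i0 i1 : Fin n) (h : i0 ≠ i1) (k : ℤ) (w : FreeGroup (Fin n)) :
    nuE i0 i1 h k w = nu i0 i1 k w := rfl

lemma E_nu (i0 i1 : Fin n) (h : i0 ≠ i1) (k : ℤ) (i : Fin n) (w : FreeGroup (Fin n)) :
    E i (nu i0 i1 k w) = E i w + (if i = i1 then k * E i0 w else 0) := by
  induction w using FreeGroup.induction_on with
  | C1 => simp
  | of j =>
      rw [nu_of]
      by_cases hj : j = i0
      · subst hj
        split_ifs with hi <;>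
          simp_all [map_mul, map_zpow, eq_comm] <;> split_ifs <;> simp_all
      · split_ifs with hi <;> simp_all [eq_comm] <;> split_ifs <;> simp_all
  | inv_of j ih =>
      simp only [map_inv, E_inv, ih]
      split_ifs <;> ring
  | mul u v ihu ihv =>
      simp only [map_mul, E_mul, ihu, ihv]
      split_ifs <;> ring

/-- Inversion hom: `x_{i1} ↦ x_{i1}⁻¹`, other generators fixed. -/
def io (i1 : Fin n) : FreeGroup (Fin n) →* FreeGroup (Fin n) :=
  FreeGroup.lift fun j => if j = i1 then (FreeGroup.of j)⁻¹ else FreeGroup.of j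

lemma io_of (i1 j : Fin n) :
    io i1 (FreeGroup.of j) = if j = i1 then (FreeGroup.of j)⁻¹ else FreeGroup.of j :=
  FreeGroup.lift_apply_of

lemma io_comp (i1 : Fin n) : (io i1).comp (io i1) = MonoidHom.id _ := by
  refine FreeGroup.ext_hom _ _ fun j => ?_
  by_cases hj : j = i1 <;> simp [io_of, hj, map_inv]

/-- Inversion automorphism. -/
def ioE (i1 : Fin n) : FreeGroup (Fin n) ≃* FreeGroup (Fin n) :=
  MonoidHom.toMulEquiv (io i1) (io i1) (io_comp i1) (io_comp i1)

@[simp] lemma ioE_apply (i1 : Fin n) (w : FreeGroup (Fin n)) : ioE i1 w = io i1 w := rfl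

lemma E_io (i1 i : Fin n) (w : FreeGroup (Fin n)) :
    E i (io i1 w) = if i = i1 then - E i w else E i w := by
  induction w using FreeGroup.induction_on with
  | C1 => simp
  | of j =>
      rw [io_of]
      by_cases hj : j = i1
      · subst hj
        split_ifs with hi <;> simp_all [eq_comm] <;> split_ifs <;> simp_all
      · split_ifs with hi <;> simp_all [eq_comm] <;> split_ifs <;> simp_all
  | inv_of j ih =>
      simp only [map_inv, E_inv, ih]
      split_ifs <;> ring
  | mul u v ihu ihv =>
      simp only [map_mul, E_mul, ihu, ihv]
      split_ifs <;> ring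

/-- Swap automorphism. -/
def sw (i0 i1 : Fin n) : FreeGroup (Fin n) ≃* FreeGroup (Fin n) :=
  FreeGroup.freeGroupCongr (Equiv.swap i0 i1)

lemma sw_apply (i0 i1 : Fin n) (w : FreeGroup (Fin n)) :
    sw i0 i1 w = FreeGroup.map (Equiv.swap i0 i1) w := rfl

lemma E_sw (i0 i1 i : Fin n) (w : FreeGroup (Fin n)) :
    E i (sw i0 i1 w) = E (Equiv.swap i0 i1 i) w := by
  rw [sw_apply]
  induction w using FreeGroup.induction_on with
  | C1 => simp
  | of j =>
      rw [FreeGroup.map.of]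
      simp only [E_of]
      have : Equiv.swap i0 i1 j = i ↔ j = Equiv.swap i0 i1 i := by
        rw [← Equiv.swap_apply_eq_iff]
      split_ifs with h1 h2 h2 <;> tauto
  | inv_of j ih =>
      simp only [map_inv, E_inv, ih]
  | mul u v ihu ihv =>
      simp only [map_mul, E_mul, ihu, ihv]

/- ### Norm bounds -/

lemma mk_cons (p : Fin n × Bool) (L : List (Fin n × Bool)) :
    FreeGroup.mk (p :: L)
      = (if p.2 then FreeGroup.of p.1 else (FreeGroup.of p.1)⁻¹) * FreeGroup.mk L := by
  rcases p with ⟨a, b⟩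
  cases b
  · have h1 : (FreeGroup.of a)⁻¹ = FreeGroup.mk [(a, false)] := by
      show (FreeGroup.mk [(a, true)])⁻¹ = _
      rw [FreeGroup.inv_mk]
      rfl
    simp only [if_neg (by simp : ¬((a, false).2 = true)), h1, FreeGroup.mul_mk]
    rfl
  · simp only [if_pos rfl]
    show _ = FreeGroup.mk [(a, true)] * _
    rw [FreeGroup.mul_mk]
    rfl

lemma norm_hom_le (φ : FreeGroup (Fin n) →* FreeGroup (Fin n)) (C : ℕ)
    (hC : ∀ j, (φ (FreeGroup.of j)).norm ≤ C) (w : FreeGroup (Fin n)) :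
    (φ w).norm ≤ C * w.norm := by
  have key : ∀ L : List (Fin n × Bool), (φ (FreeGroup.mk L)).norm ≤ C * L.length := by
    intro L
    induction L with
    | nil =>
        have : FreeGroup.mk ([] : List (Fin n × Bool)) = 1 := rfl
        simp [this, FreeGroup.norm_one]
    | cons p L ih =>
        rw [mk_cons, map_mul]
        refine (FreeGroup.norm_mul_le _ _).trans ?_
        have h1 : (φ (if p.2 then FreeGroup.of p.1 else (FreeGroup.of p.1)⁻¹)).norm ≤ C := by
          split
          · exact hC _
          · rw [map_inv, FreeGroup.norm_inv_eq]; exact hC _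
        calc (φ (if p.2 then FreeGroup.of p.1 else (FreeGroup.of p.1)⁻¹)).norm
              + (φ (FreeGroup.mk L)).norm
            ≤ C + C * L.length := Nat.add_le_add h1 ih
          _ = C * (p :: L).length := by simp [List.length_cons, Nat.mul_succ]; ring
  have := key w.toWord
  rwa [FreeGroup.mk_toWord] at this

lemma natAbs_E_le (i : Fin n) (w : FreeGroup (Fin n)) : (E i w).natAbs ≤ w.norm := by
  have key : ∀ L : List (Fin n × Bool), (E i (FreeGroup.mk L)).natAbs ≤ L.length := by
    intro L
    induction L with
    | nil =>
        have : FreeGroup.mk ([] : List (Fin n × Bool)) = 1 := rfl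
        simp [this]
    | cons p L ih =>
        rw [mk_cons, E_mul]
        refine (Int.natAbs_add_le _ _).trans ?_
        have h1 : (E i (if p.2 then FreeGroup.of p.1 else (FreeGroup.of p.1)⁻¹)).natAbs ≤ 1 := by
          split <;> simp only [E_inv, Int.natAbs_neg, E_of] <;> split <;> simp
        calc _ ≤ 1 + L.length := Nat.add_le_add h1 ih
          _ = (p :: L).length := by simp [Nat.add_comm]
  have := key w.toWord
  rw [FreeGroup.mk_toWord] at this
  exact this.trans (le_of_eq rfl)

lemma norm_zpow (a : Fin n) (k : ℤ) : (FreeGroup.of a ^ k).norm = k.natAbs := by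
  cases k with
  | ofNat m => rw [Int.ofNat_eq_coe, zpow_natCast, FreeGroup.norm_of_pow]; rfl
  | negSucc m =>
      rw [zpow_negSucc, FreeGroup.norm_inv_eq, FreeGroup.norm_of_pow]
      rfl

lemma norm_nu_le (i0 i1 : Fin n) (k : ℤ) (w : FreeGroup (Fin n)) :
    (nu i0 i1 k w).norm ≤ (1 + k.natAbs) * w.norm := by
  refine norm_hom_le _ _ (fun j => ?_) w
  rw [nu_of]
  split
  · refine (FreeGroup.norm_mul_le _ _).trans ?_
    rw [FreeGroup.norm_of, norm_zpow]
  · rw [FreeGroup.norm_of]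
    exact Nat.le_add_right 1 k.natAbs

lemma norm_io_le (i1 : Fin n) (w : FreeGroup (Fin n)) : (io i1 w).norm ≤ w.norm := by
  have := norm_hom_le (io i1) 1 (fun j => by
    rw [io_of]; split <;> simp [FreeGroup.norm_inv_eq, FreeGroup.norm_of]) w
  simpa using this

lemma norm_sw_le (i0 i1 : Fin n) (w : FreeGroup (Fin n)) : (sw i0 i1 w).norm ≤ w.norm := by
  rw [sw_apply]
  have := norm_hom_le (FreeGroup.map (Equiv.swap i0 i1)) 1 (fun j => by
    rw [FreeGroup.map.of, FreeGroup.norm_of]) w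
  simpa using this



lemma key (i0 i1 : Fin n) (hne : i0 ≠ i1) :
    ∀ m : ℕ, ∀ w : FreeGroup (Fin n), (E i0 w).natAbs ≤ m →
    ∃ α : FreeGroup (Fin n) ≃* FreeGroup (Fin n),
      (E i0 (α w) = 0 ∨ E i1 (α w) = 0) ∧
      (α w).norm ≤ ((E i0 w).natAbs + 1) ^ 2 * ((E i1 w).natAbs + 1) ^ 2 * w.norm := by
  intro m
  induction m using Nat.strong_induction_on with
  | _ m IH =>
  intro w hw
  by_cases ha : E i0 w = 0
  · refine ⟨MulEquiv.refl _, Or.inl (by simpa using ha), ?_⟩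
    have h1 : 0 < ((E i0 w).natAbs + 1) ^ 2 * ((E i1 w).natAbs + 1) ^ 2 := by positivity
    calc (MulEquiv.refl _ w).norm = 1 * w.norm := by simp
      _ ≤ _ := Nat.mul_le_mul_right _ h1
  -- notation
  set a := E i0 w with ha_def
  set b := E i1 w with hb_def
  have hA1 : 1 ≤ a.natAbs := by
    rcases Nat.eq_zero_or_pos a.natAbs with h | h
    · exact absurd (Int.natAbs_eq_zero.mp h) ha
    · exact h
  -- Step 1: make the second exponent sum nonnegative.
  obtain ⟨α₁, h10, h11, h1n⟩ :
      ∃ α₁ : FreeGroup (Fin n) ≃* FreeGroup (Fin n),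
        E i0 (α₁ w) = a ∧ E i1 (α₁ w) = (b.natAbs : ℤ) ∧ (α₁ w).norm ≤ w.norm := by
    rcases le_or_gt 0 b with hb | hb
    · exact ⟨MulEquiv.refl _, by simp [ha_def], (Int.natAbs_of_nonneg hb).symm, by simp⟩
    · refine ⟨ioE i1, ?_, ?_, ?_⟩
      · rw [ioE_apply, E_io, if_neg hne]
      · rw [ioE_apply, E_io, if_pos rfl, ← hb_def, Int.ofNat_natAbs_of_nonpos hb.le]
      · rw [ioE_apply]; exact norm_io_le i1 w
  set w₁ := α₁ w with hw₁
  rcases lt_or_ge b.natAbs a.natAbs with hBA | hAB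
  -- Case |b| < |a| : swap the two coordinates and recurse.
  · set w₂ := sw i0 i1 w₁ with hw₂
    have h20 : E i0 w₂ = (b.natAbs : ℤ) := by
      rw [hw₂, E_sw, Equiv.swap_apply_left, h11]
    have h21 : E i1 w₂ = a := by
      rw [hw₂, E_sw, Equiv.swap_apply_right, h10]
    have hm : b.natAbs < m := lt_of_lt_of_le hBA hw
    obtain ⟨α', hd, hb'⟩ := IH b.natAbs hm w₂ (le_of_eq (by rw [h20]; exact Int.natAbs_natCast _))
    refine ⟨(α₁.trans (sw i0 i1)).trans α', ?_, ?_⟩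
    · exact hd
    · have e1 : ((α₁.trans (sw i0 i1)).trans α') w = α' w₂ := rfl
      rw [e1]
      refine hb'.trans ?_
      rw [h20, h21]
      have hn2 : w₂.norm ≤ w.norm := by
        rw [hw₂]
        exact (norm_sw_le i0 i1 w₁).trans h1n
      calc ((b.natAbs : ℤ).natAbs + 1) ^ 2 * (a.natAbs + 1) ^ 2 * w₂.norm
          = (a.natAbs + 1) ^ 2 * (b.natAbs + 1) ^ 2 * w₂.norm := by
            rw [Int.natAbs_natCast]; ring
        _ ≤ (a.natAbs + 1) ^ 2 * (b.natAbs + 1) ^ 2 * w.norm :=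
            Nat.mul_le_mul_left _ hn2
  -- Case |a| ≤ |b| : Euclidean step.
  · set b₂ : ℤ := (b.natAbs : ℤ) with hb₂
    have hbnn : 0 ≤ b₂ := Int.ofNat_nonneg _
    set q : ℤ := b₂ / a with hq
    set r : ℤ := b₂ % a with hr
    have hrnn : 0 ≤ r := Int.emod_nonneg b₂ ha
    have hrlt : r < |a| := Int.emod_lt_abs b₂ ha
    have hdiv : a * q + r = b₂ := Int.mul_ediv_add_emod b₂ a
    set K := q.natAbs with hK
    set R := r.natAbs with hR
    have hRr : (R : ℤ) = r := Int.natAbs_of_nonneg hrnn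
    have habs : |a| = (a.natAbs : ℤ) := Int.abs_eq_natAbs a
    have hRA : R < a.natAbs := by
      have : (R : ℤ) < (a.natAbs : ℤ) := by rw [hRr, ← habs]; exact hrlt
      exact_mod_cast this
    -- the Nielsen step
    set w₂ := sw i0 i1 (nuE i0 i1 hne (-q) w₁) with hw₂
    have hnu0 : E i0 (nu i0 i1 (-q) w₁) = a := by
      rw [E_nu i0 i1 hne, if_neg hne, add_zero, h10]
    have hnu1 : E i1 (nu i0 i1 (-q) w₁) = r := by
      rw [E_nu i0 i1 hne, if_pos rfl, h10, h11]
      linarith [hdiv]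
    have h20 : E i0 w₂ = r := by
      rw [hw₂, E_sw, Equiv.swap_apply_left, nuE_apply, hnu1]
    have h21 : E i1 w₂ = a := by
      rw [hw₂, E_sw, Equiv.swap_apply_right, nuE_apply, hnu0]
    have hm : R < m := lt_of_lt_of_le hRA hw
    obtain ⟨α', hd, hb'⟩ := IH R hm w₂ (le_of_eq (by rw [h20]))
    refine ⟨((α₁.trans (nuE i0 i1 hne (-q))).trans (sw i0 i1)).trans α', hd, ?_⟩
    have e1 : (((α₁.trans (nuE i0 i1 hne (-q))).trans (sw i0 i1)).trans α') w = α' w₂ := rfl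
    rw [e1]
    refine hb'.trans ?_
    rw [h20, h21, ← hR]
    -- norm of w₂
    have hn2 : w₂.norm ≤ (1 + K) * w.norm := by
      rw [hw₂]
      refine (norm_sw_le i0 i1 _).trans ?_
      rw [nuE_apply]
      refine (norm_nu_le i0 i1 (-q) w₁).trans ?_
      have : (-q).natAbs = K := by rw [hK, Int.natAbs_neg]
      rw [this]
      exact Nat.mul_le_mul_left _ h1n
    -- key arithmetic inequality : (R+1)*(K+1) ≤ b.natAbs + 1
    have hkey : (R + 1) * (K + 1) ≤ b.natAbs + 1 := by
      have h1 : b₂ = (a.natAbs : ℤ) * (K : ℤ) + r := by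
        have haq : 0 ≤ a * q := by
          have : r < b₂ := lt_of_lt_of_le (lt_of_lt_of_le hrlt (by
            rw [habs, hb₂]; exact_mod_cast hAB)) (le_refl b₂)
          linarith [hdiv]
        have h4 : a * q = (a.natAbs : ℤ) * (K : ℤ) := by
          have h5 : (((a * q).natAbs : ℕ) : ℤ) = a * q := Int.natAbs_of_nonneg haq
          rw [← h5, Int.natAbs_mul]
          push_cast
          rw [hK, Int.natCast_natAbs]
        linarith [hdiv, h4]
      have h2 : (R : ℤ) + 1 ≤ (a.natAbs : ℤ) := by
        rw [hRr]
        calc r + 1 ≤ |a| := by linarith [hrlt]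
          _ = _ := habs
      have h3 : ((R : ℤ) + 1) * ((K : ℤ) + 1) ≤ (b.natAbs : ℤ) + 1 := by
        have hKnn : (0:ℤ) ≤ (K:ℤ) := Int.ofNat_nonneg _
        have hRnn : (0:ℤ) ≤ (R:ℤ) := Int.ofNat_nonneg _
        nlinarith [h1, h2, hRr]
      exact_mod_cast h3
    calc (R + 1) ^ 2 * (a.natAbs + 1) ^ 2 * w₂.norm
        ≤ (R + 1) ^ 2 * (a.natAbs + 1) ^ 2 * ((1 + K) * w.norm) := Nat.mul_le_mul_left _ hn2
      _
        = ((R + 1) ^ 2 * (1 + K)) * ((a.natAbs + 1) ^ 2 * w.norm) := by ring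
      _ ≤ ((R + 1) * (K + 1)) ^ 2 * ((a.natAbs + 1) ^ 2 * w.norm) := by
          refine Nat.mul_le_mul_right _ ?_
          calc (R + 1) ^ 2 * (1 + K) ≤ (R + 1) ^ 2 * (1 + K) ^ 2 := by
                refine Nat.mul_le_mul_left _ ?_
                exact Nat.le_self_pow (by norm_num) _
            _ = ((R + 1) * (K + 1)) ^ 2 := by ring
      _ ≤ (b.natAbs + 1) ^ 2 * ((a.natAbs + 1) ^ 2 * w.norm) := by
          refine Nat.mul_le_mul_right _ ?_
          exact Nat.pow_le_pow_left hkey 2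
      _ = (a.natAbs + 1) ^ 2 * (b.natAbs + 1) ^ 2 * w.norm := by ring

end EuclidAux

lemma EuclidAux.expSum_eq_one_of_E {n : ℕ} {i : Fin n} {u : FreeGroup (Fin n)}
    (h : EuclidAux.E i u = 0) : expSum i u = 1 := by
  have h2 : Multiplicative.toAdd (expSum i u) = Multiplicative.toAdd (1 : Multiplicative ℤ) := by
    simpa [EuclidAux.E] using h
  exact Multiplicative.toAdd.injective h2

/-- There is a single polynomial `p`, independent of the rank `n`, such that for every
`n ≥ 2` and every `w ∈ F_n` some automorphism of `F_n` carries `w` to a word with zero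
exponent sum in some generator and of length at most `p(ℓ(w))`. -/
theorem exists_universal_poly_automorphism_zero_expSum :
    ∃ p : Polynomial ℕ, ∀ n : ℕ, 2 ≤ n → ∀ w : FreeGroup (Fin n),
      ∃ (α : FreeGroup (Fin n) ≃* FreeGroup (Fin n)) (i : Fin n),
        expSum i (α w) = 1 ∧ (α w).norm ≤ p.eval w.norm := by
  refine ⟨Polynomial.X * (Polynomial.X + 1) ^ 4, ?_⟩
  intro n hn w
  set i0 : Fin n := ⟨0, by omega⟩ with hi0
  set i1 : Fin n := ⟨1, by omega⟩ with hi1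
  have hne : i0 ≠ i1 := by
    simp [hi0, hi1, Fin.ext_iff]
  obtain ⟨α, hd, hb⟩ := EuclidAux.key i0 i1 hne (EuclidAux.E i0 w).natAbs w le_rfl
  have heval : (Polynomial.X * (Polynomial.X + 1) ^ 4 : Polynomial ℕ).eval w.norm
      = w.norm * (w.norm + 1) ^ 4 := by
    simp [Polynomial.eval_mul, Polynomial.eval_pow, Polynomial.eval_add]
  have hbound : (α w).norm ≤ w.norm * (w.norm + 1) ^ 4 := by
    refine hb.trans ?_
    have hA := EuclidAux.natAbs_E_le i0 w
    have hB := EuclidAux.natAbs_E_le i1 w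
    calc ((EuclidAux.E i0 w).natAbs + 1) ^ 2 * ((EuclidAux.E i1 w).natAbs + 1) ^ 2 * w.norm
        ≤ (w.norm + 1) ^ 2 * (w.norm + 1) ^ 2 * w.norm :=
          Nat.mul_le_mul_right _ (Nat.mul_le_mul
            (Nat.pow_le_pow_left (Nat.add_le_add_right hA 1) 2)
            (Nat.pow_le_pow_left (Nat.add_le_add_right hB 1) 2))
      _ = w.norm * (w.norm + 1) ^ 4 := by ring
  rcases hd with h | h
  · exact ⟨α, i0, EuclidAux.expSum_eq_one_of_E h, by rw [heval]; exact hbound⟩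
  · exact ⟨α, i1, EuclidAux.expSum_eq_one_of_E h, by rw [heval]; exact hbound⟩
end

section
/- Let G be a finite group. Then for every n ≥ 1 there exists a word w in the free group F_n such that for all g_1, …, g_n ∈ G, the evaluation of w at (g_1, …, g_n) equals the identity of G if and only if the subgroup of G generated by g_1, …, g_n is solvable. -/
open Subgroup Pointwise
open scoped commutatorElement

section Stab
variable {H : Type*} [Group H]

private lemma dS_succ_le (k : ℕ) : derivedSeries H (k + 1) ≤ derivedSeries H k := by
  haveI := derivedSeries_normal H k
  rw [derivedSeries_succ]
  exact Subgroup.commutator_le_right _ _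

private lemma dS_le_of_le {j m : ℕ} (h : j ≤ m) : derivedSeries H m ≤ derivedSeries H j := by
  induction m with
  | zero => simp_all
  | succ m ih =>
    rcases Nat.lt_or_ge j (m + 1) with h' | h'
    · exact (dS_succ_le m).trans (ih (Nat.lt_succ_iff.mp h'))
    · have : j = m + 1 := le_antisymm h h'
      subst this; exact le_rfl

private lemma dS_const {j : ℕ} (h : derivedSeries H (j + 1) = derivedSeries H j) :
    ∀ m, j ≤ m → derivedSeries H m = derivedSeries H j := by
  intro m hm
  induction m with
  | zero =>
    have : j = 0 := Nat.le_zero.mp hm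
    subst this; rfl
  | succ m ih =>
    rcases Nat.lt_or_ge j (m + 1) with h' | h'
    · have hm' := ih (Nat.lt_succ_iff.mp h')
      rw [derivedSeries_succ, hm', ← derivedSeries_succ, h]
    · have : j = m + 1 := le_antisymm hm h'
      subst this; rfl

private lemma exists_dS_stab (H : Type*) [Group H] [Finite H] :
    ∃ j ≤ Nat.card H, derivedSeries H (j + 1) = derivedSeries H j := by
  by_contra hc
  push_neg at hc
  have key : ∀ j, j ≤ Nat.card H + 1 → Nat.card (derivedSeries H j) + j ≤ Nat.card H := by
    intro j
    induction j with
    | zero => intro _; simpa using Subgroup.card_le_card_group (derivedSeries H 0)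
    | succ j ih =>
      intro hj
      have hj' : j ≤ Nat.card H := Nat.lt_succ_iff.mp hj
      have hlt : derivedSeries H (j + 1) < derivedSeries H j :=
        lt_of_le_of_ne (dS_succ_le j) (hc j hj')
      have hset : ((derivedSeries H (j + 1) : Subgroup H) : Set H) ⊂
          ((derivedSeries H j : Subgroup H) : Set H) := hlt
      have hcard : Nat.card (derivedSeries H (j + 1)) < Nat.card (derivedSeries H j) := by
        rw [← SetLike.coe_sort_coe, ← SetLike.coe_sort_coe,
          Nat.card_coe_set_eq, Nat.card_coe_set_eq]
        exact Set.ncard_lt_ncard hset (Set.toFinite _)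
      have := ih (le_trans (Nat.le_succ j) hj)
      omega
  have h1 : 1 ≤ Nat.card (derivedSeries H (Nat.card H + 1)) := Nat.card_pos
  have := key (Nat.card H + 1) le_rfl
  omega

private lemma dS_stab (H : Type*) [Group H] [Finite H] {k : ℕ} (hk : Nat.card H ≤ k) :
    derivedSeries H (k + 1) = derivedSeries H k := by
  obtain ⟨j, hj, he⟩ := exists_dS_stab H
  rw [dS_const he k (hj.trans hk), dS_const he (k + 1) ((hj.trans hk).trans (Nat.le_succ k))]

private lemma isSolvable_iff_dS (H : Type*) [Group H] [Finite H] {k : ℕ}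
    (hk : Nat.card H ≤ k) : IsSolvable H ↔ derivedSeries H k = ⊥ := by
  constructor
  · rintro ⟨m, hm⟩
    rcases le_or_gt m k with h | h
    · exact le_bot_iff.mp (hm ▸ dS_le_of_le h)
    · obtain ⟨j, hj, he⟩ := exists_dS_stab H
      rw [dS_const he k (hj.trans hk), ← dS_const he m (le_trans (hj.trans hk) h.le), hm]
  · exact fun h => ⟨k, h⟩

end Stab

section Cover
variable {Q : Type*} [Group Q]

private def IsMaxNormal (M : Subgroup Q) : Prop :=
  M.Normal ∧ M ≠ ⊤ ∧ ∀ K : Subgroup Q, K.Normal → M < K → K = ⊤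

private lemma exists_maxnormal_above [Finite Q] (N : Subgroup Q) (hn : N.Normal)
    (hnt : N ≠ ⊤) : ∃ M, IsMaxNormal M ∧ N ≤ M := by
  classical
  have hfin : {K : Subgroup Q | K.Normal ∧ K ≠ ⊤ ∧ N ≤ K}.Finite := Set.toFinite _
  obtain ⟨M, hM, hmax⟩ := Set.Finite.exists_maximalFor id _ hfin ⟨N, hn, hnt, le_rfl⟩
  refine ⟨M, ⟨hM.1, hM.2.1, ?_⟩, hM.2.2⟩
  intro K hK hMK
  by_contra hKT
  exact hMK.not_ge (hmax ⟨hK, hKT, hM.2.2.trans hMK.le⟩ hMK.le)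

private lemma finset_inf_normal (s : Finset (Subgroup Q)) (hs : ∀ K ∈ s, K.Normal) :
    (s.inf id).Normal := by
  classical
  induction s using Finset.induction_on with
  | empty => simpa using inferInstanceAs (⊤ : Subgroup Q).Normal
  | @insert K₀ s' hK₀ ih =>
    rw [Finset.inf_insert]
    haveI h1 : K₀.Normal := hs K₀ (Finset.mem_insert_self _ _)
    haveI h2 : (s'.inf id).Normal := ih fun K hK => hs K (Finset.mem_insert_of_mem hK)
    simp only [id_eq]
    infer_instance

/-- Dedekind modular law for subgroups (with normality of `B`). -/
private lemma modular_law {A B C : Subgroup Q} [hB : B.Normal] (hBA : B ≤ A) :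
    A ⊓ (B ⊔ C) = B ⊔ (A ⊓ C) := by
  refine le_antisymm ?_ (le_inf (sup_le hBA inf_le_left)
    (sup_le le_sup_left (inf_le_right.trans le_sup_right)))
  intro x hx
  rw [Subgroup.mem_inf] at hx
  obtain ⟨hxA, hxBC⟩ := hx
  have : x ∈ ((B : Set Q) * (C : Set Q)) := by
    rw [← Subgroup.normal_mul B C]; exact hxBC
  obtain ⟨b, hb, c, hc, rfl⟩ := this
  have hcA : c ∈ A := by
    have : b⁻¹ * (b * c) ∈ A := A.mul_mem (A.inv_mem (hBA hb)) hxA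
    simpa using this
  exact Subgroup.mul_mem _ (le_sup_left (a := B) (b := A ⊓ C) hb)
    (le_sup_right (a := B) (b := A ⊓ C) (Subgroup.mem_inf.mpr ⟨hcA, hc⟩))

/-- The center of the quotient by a maximal normal subgroup of a perfect group is trivial. -/
private lemma center_quot_maxnormal (hQ : ⁅(⊤ : Subgroup Q), (⊤ : Subgroup Q)⁆ = ⊤)
    {M : Subgroup Q} [M.Normal] (hM : IsMaxNormal M) :
    Subgroup.center (Q ⧸ M) = ⊥ := by
  set π := QuotientGroup.mk' M with hπ
  have hsurj : Function.Surjective π := QuotientGroup.mk'_surjective M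
  set K : Subgroup Q := (Subgroup.center (Q ⧸ M)).comap π with hK
  haveI : K.Normal := Subgroup.normal_comap π
  have hMK : M ≤ K := by
    intro x hx
    have : π x = 1 := by
      rw [← MonoidHom.mem_ker, QuotientGroup.ker_mk']; exact hx
    simp [hK, Subgroup.mem_comap, this, Subgroup.one_mem]
  rcases eq_or_lt_of_le hMK with heq | hlt
  · -- K = M : center is trivial
    have : Subgroup.center (Q ⧸ M) = K.map π :=
      (Subgroup.map_comap_eq_self_of_surjective hsurj _).symm
    rw [this, ← heq, Subgroup.map_eq_bot_iff, QuotientGroup.ker_mk']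
  · -- K = ⊤ : quotient is abelian, contradicting perfectness
    exfalso
    have hKtop : K = ⊤ := hM.2.2 K inferInstance hlt
    have hcent : Subgroup.center (Q ⧸ M) = ⊤ := by
      rw [← Subgroup.map_comap_eq_self_of_surjective hsurj (Subgroup.center (Q ⧸ M)), ← hK,
        hKtop, ← MonoidHom.range_eq_map, MonoidHom.range_eq_top]
      exact hsurj
    have hab : ⁅(⊤ : Subgroup (Q ⧸ M)), (⊤ : Subgroup (Q ⧸ M))⁆ = ⊥ := by
      rw [eq_bot_iff, Subgroup.commutator_le]
      intro a _ b _
      have ha : a ∈ Subgroup.center (Q ⧸ M) := by rw [hcent]; trivial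
      rw [Subgroup.mem_bot, commutatorElement_def, ← (Subgroup.mem_center_iff.mp ha) b]
      group
    have hperf : ⁅(⊤ : Subgroup (Q ⧸ M)), (⊤ : Subgroup (Q ⧸ M))⁆ = ⊤ := by
      have h2 := Subgroup.map_commutator (⊤ : Subgroup Q) (⊤ : Subgroup Q) π
      rw [hQ, ← MonoidHom.range_eq_map, MonoidHom.range_eq_top.mpr hsurj] at h2
      exact h2.symm
    rw [hperf] at hab
    have : M = ⊤ := by
      rw [eq_top_iff]
      intro x _
      have : π x ∈ (⊤ : Subgroup (Q ⧸ M)) := trivial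
      rw [hab] at this
      rw [← QuotientGroup.ker_mk' M]
      exact this
    exact hM.2.1 this


private lemma inf_not_le_maxnormal (hQ : ⁅(⊤ : Subgroup Q), (⊤ : Subgroup Q)⁆ = ⊤)
    (s : Finset (Subgroup Q)) :
    ∀ (_ : ∀ K ∈ s, IsMaxNormal K) (M : Subgroup Q), IsMaxNormal M → M ∉ s →
      ¬ s.inf id ≤ M := by
  classical
  induction s using Finset.induction_on with
  | empty =>
    intro _ M hM _ h
    simp only [Finset.inf_empty] at h
    exact hM.2.1 (top_le_iff.mp h)
  | @insert K₀ s' hK₀ ih =>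
    intro hs M hM hMs hle
    have hK₀max : IsMaxNormal K₀ := hs K₀ (Finset.mem_insert_self _ _)
    haveI hK₀n : K₀.Normal := hK₀max.1
    haveI hMn : M.Normal := hM.1
    have hs' : ∀ K ∈ s', IsMaxNormal K := fun K hK => hs K (Finset.mem_insert_of_mem hK)
    set D := s'.inf id with hD
    haveI hDn : D.Normal := finset_inf_normal s' (fun K hK => (hs' K hK).1)
    have hDM : ¬ D ≤ M := ih hs' M hM (fun h => hMs (Finset.mem_insert_of_mem h))
    have hDK : ¬ D ≤ K₀ := ih hs' K₀ hK₀max hK₀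
    have hKM : K₀ ≠ M := fun h => hMs (h ▸ Finset.mem_insert_self _ _)
    rw [Finset.inf_insert] at hle
    simp only [id_eq] at hle
    -- `hle : K₀ ⊓ D ≤ M`
    by_cases hC : (D ⊓ M) ⊔ K₀ = K₀
    · -- case `D ⊓ M ≤ K₀`
      have hDMK : D ⊓ M ≤ K₀ := by rw [← hC]; exact le_sup_left
      set π := QuotientGroup.mk' K₀ with hπdef
      have hsurj : Function.Surjective π := QuotientGroup.mk'_surjective K₀
      have hbot : K₀.map π = ⊥ := by
        rw [Subgroup.map_eq_bot_iff, QuotientGroup.ker_mk']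
      have hMtop : M ⊔ K₀ = ⊤ := by
        have h1 : ¬ K₀ ≤ M := by
          intro h
          rcases eq_or_lt_of_le h with he | hl
          · exact hKM he
          · exact hM.2.1 (hK₀max.2.2 M hMn hl)
        have hlt : M < M ⊔ K₀ :=
          lt_of_le_of_ne le_sup_left (fun h => h1 (h ▸ le_sup_right))
        exact hM.2.2 _ inferInstance hlt
      have hmapM : M.map π = ⊤ := by
        have h2 := Subgroup.map_sup M K₀ π
        rw [hMtop, ← MonoidHom.range_eq_map, MonoidHom.range_eq_top.mpr hsurj, hbot,
          sup_bot_eq] at h2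
        exact h2.symm
      have hcomm : ⁅D, M⁆ ≤ K₀ := (Subgroup.commutator_le_inf D M).trans hDMK
      have hcm : ⁅D.map π, M.map π⁆ ≤ ⊥ := by
        rw [← Subgroup.map_commutator]
        exact le_trans (Subgroup.map_mono hcomm) (le_of_eq hbot)
      have hcent : D.map π ≤ Subgroup.center (Q ⧸ K₀) := by
        intro x hx
        rw [Subgroup.mem_center_iff]
        intro y
        have hy : y ∈ M.map π := by rw [hmapM]; trivial
        have h1 : ⁅x, y⁆ = 1 := by
          have := hcm (Subgroup.commutator_mem_commutator hx hy)
          rwa [Subgroup.mem_bot] at this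
        exact (commutatorElement_eq_one_iff_mul_comm.mp h1).symm
      have hbotD : D.map π = ⊥ :=
        le_bot_iff.mp (hcent.trans (le_of_eq (center_quot_maxnormal hQ hK₀max)))
      rw [Subgroup.map_eq_bot_iff, QuotientGroup.ker_mk'] at hbotD
      exact hDK hbotD
    · -- case `(D ⊓ M) ⊔ K₀ = ⊤`
      have hCtop : (D ⊓ M) ⊔ K₀ = ⊤ :=
        hK₀max.2.2 _ inferInstance (lt_of_le_of_ne le_sup_right (fun h => hC h.symm))
      have hmod : D ⊓ ((D ⊓ M) ⊔ K₀) = (D ⊓ M) ⊔ (D ⊓ K₀) := modular_law inf_le_left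
      rw [hCtop, inf_top_eq] at hmod
      refine hDM ?_
      rw [hmod]
      exact sup_le inf_le_right (le_trans (le_of_eq (inf_comm D K₀)) hle)

private lemma exists_avoid_maxnormals (hQ : ⁅(⊤ : Subgroup Q), (⊤ : Subgroup Q)⁆ = ⊤)
    (s : Finset (Subgroup Q)) (hs : ∀ K ∈ s, IsMaxNormal K) :
    ∃ q : Q, ∀ K ∈ s, q ∉ K := by
  classical
  induction s using Finset.induction_on with
  | empty => exact ⟨1, by simp⟩
  | @insert K₀ s' hK₀ ih =>
    obtain ⟨q₀, hq₀⟩ := ih (fun K hK => hs K (Finset.mem_insert_of_mem hK))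
    have hK₀max : IsMaxNormal K₀ := hs K₀ (Finset.mem_insert_self _ _)
    have hDK : ¬ s'.inf id ≤ K₀ :=
      inf_not_le_maxnormal hQ s' (fun K hK => hs K (Finset.mem_insert_of_mem hK)) K₀ hK₀max hK₀
    obtain ⟨d, hdD, hdK⟩ := SetLike.not_le_iff_exists.mp hDK
    by_cases hq : q₀ ∈ K₀
    · refine ⟨q₀ * d, ?_⟩
      intro K hK
      rcases Finset.mem_insert.mp hK with rfl | hK'
      · intro h
        exact hdK (by simpa using K.mul_mem (K.inv_mem hq) h)
      · intro h
        have hdK' : d ∈ K := (Finset.inf_le hK' : s'.inf id ≤ id K) (by simpa using hdD)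
        exact hq₀ K hK' (by simpa using K.mul_mem h (K.inv_mem hdK'))
    · refine ⟨q₀, ?_⟩
      intro K hK
      rcases Finset.mem_insert.mp hK with rfl | hK'
      · exact hq
      · exact hq₀ K hK'

private lemma exists_avoid_normals [Finite Q] (hQ : ⁅(⊤ : Subgroup Q), (⊤ : Subgroup Q)⁆ = ⊤)
    {ι : Type*} [Finite ι] (N : ι → Subgroup Q) (hN : ∀ i, (N i).Normal)
    (hNT : ∀ i, N i ≠ ⊤) : ∃ q : Q, ∀ i, q ∉ N i := by
  classical
  haveI := Fintype.ofFinite ι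
  choose M hM hle using fun i => exists_maxnormal_above (N i) (hN i) (hNT i)
  obtain ⟨q, hq⟩ := exists_avoid_maxnormals hQ (Finset.image M Finset.univ)
    (by
      intro K hK
      obtain ⟨i, _, rfl⟩ := Finset.mem_image.mp hK
      exact hM i)
  exact ⟨q, fun i h => hq (M i) (Finset.mem_image_of_mem M (Finset.mem_univ i)) (hle i h)⟩

end Cover


section Glue
variable {Γ A : Type*} [Group Γ] [Group A]

private lemma map_dS_factor (f : Γ →* A) (m : ℕ) :
    (derivedSeries Γ m).map f = (derivedSeries f.range m).map f.range.subtype := by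
  rw [← map_derivedSeries_eq f.rangeRestrict_surjective m, Subgroup.map_map,
    MonoidHom.subtype_comp_rangeRestrict]

private lemma map_dS_eq_of_le [Finite A] (f : Γ →* A) {c k : ℕ} (hc : Nat.card A ≤ c)
    (hk : c ≤ k) : (derivedSeries Γ k).map f = (derivedSeries Γ c).map f := by
  rw [map_dS_factor f k, map_dS_factor f c]
  have hcard : Nat.card f.range ≤ c := le_trans (Subgroup.card_le_card_group _) hc
  obtain ⟨j, hj, he⟩ := exists_dS_stab f.range
  rw [dS_const he k (le_trans (hj.trans hcard) hk), dS_const he c (hj.trans hcard)]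

private lemma map_dS_eq_bot_iff [Finite A] (f : Γ →* A) {c : ℕ} (hc : Nat.card A ≤ c) :
    (derivedSeries Γ c).map f = ⊥ ↔ IsSolvable f.range := by
  rw [map_dS_factor f c]
  have hinj : Function.Injective f.range.subtype := Subgroup.subtype_injective f.range
  exact (Subgroup.map_eq_bot_iff_of_injective _ hinj).trans
    (isSolvable_iff_dS f.range (le_trans (Subgroup.card_le_card_group _) hc)).symm

end Glue

/-- For every finite group `G` and every `n ≥ 1` there is a word `w ∈ F_n` such that a
tuple `g : Fin n → G` satisfies `w` (i.e. evaluates to the identity) if and only if the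
subgroup generated by the `g i` is solvable. -/
theorem exists_word_detecting_solvability (G : Type*) [Group G] [Finite G]
    (n : ℕ) (hn : 1 ≤ n) :
    ∃ w : FreeGroup (Fin n), ∀ g : Fin n → G,
      FreeGroup.lift g w = 1 ↔ IsSolvable (Subgroup.closure (Set.range g)) := by
  classical
  set ι := {g : Fin n → G // ¬ IsSolvable (Subgroup.closure (Set.range g))} with hι
  set c := Nat.card G + Nat.card (ι → G) with hcdef
  have hcG : Nat.card G ≤ c := Nat.le_add_right _ _
  have hcι : Nat.card (ι → G) ≤ c := Nat.le_add_left _ _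
  set W : Subgroup (FreeGroup (Fin n)) := derivedSeries (FreeGroup (Fin n)) c with hW
  let F : FreeGroup (Fin n) →* (ι → G) :=
    { toFun := fun w i => FreeGroup.lift i.1 w
      map_one' := by funext i; simp
      map_mul' := fun x y => by funext i; simp }
  have hπF : ∀ i : ι, (Pi.evalMonoidHom (fun _ : ι => G) i).comp F = FreeGroup.lift i.1 :=
    fun i => MonoidHom.ext fun w => rfl
  set Q : Subgroup (ι → G) := W.map F with hQdef
  have hQperf : ⁅Q, Q⁆ = Q := by
    rw [hQdef, ← Subgroup.map_commutator, hW, ← derivedSeries_succ]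
    exact map_dS_eq_of_le F hcι (Nat.le_succ c)
  have hQtop : ⁅(⊤ : Subgroup Q), (⊤ : Subgroup Q)⁆ = ⊤ := by
    apply Subgroup.map_injective Q.subtype_injective
    rw [Subgroup.map_commutator, ← MonoidHom.range_eq_map, Subgroup.range_subtype, hQperf]
  let K : ι → Subgroup Q := fun i => ((Pi.evalMonoidHom (fun _ : ι => G) i).comp Q.subtype).ker
  have hKnormal : ∀ i, (K i).Normal := fun i => MonoidHom.normal_ker _
  have hmapπ : ∀ i : ι,
      Q.map (Pi.evalMonoidHom (fun _ : ι => G) i) = W.map (FreeGroup.lift i.1) := by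
    intro i
    rw [hQdef, Subgroup.map_map, hπF]
  have hKne : ∀ i, K i ≠ ⊤ := by
    intro i htop
    have hbot : Q.map (Pi.evalMonoidHom (fun _ : ι => G) i) = ⊥ := by
      rw [eq_bot_iff]
      rintro x ⟨q, hq, rfl⟩
      have hm : (⟨q, hq⟩ : Q) ∈ K i := htop ▸ Subgroup.mem_top _
      rw [Subgroup.mem_bot]
      exact hm
    rw [hmapπ i] at hbot
    have hsolv := (map_dS_eq_bot_iff (FreeGroup.lift i.1) hcG).mp (by rw [← hW]; exact hbot)
    rw [FreeGroup.range_lift_eq_closure] at hsolv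
    exact i.2 hsolv
  obtain ⟨q, hq⟩ := exists_avoid_normals hQtop K hKnormal hKne
  obtain ⟨w, hwW, hFw⟩ := Subgroup.mem_map.mp q.2
  refine ⟨w, ?_⟩
  intro g
  constructor
  · intro h1
    by_contra hbad
    apply hq ⟨g, hbad⟩
    show ((Pi.evalMonoidHom (fun _ : ι => G) ⟨g, hbad⟩).comp Q.subtype) q = 1
    have : (q : ι → G) ⟨g, hbad⟩ = 1 := by
      rw [← hFw]
      exact h1
    exact this
  · intro hsolv
    have hbot : W.map (FreeGroup.lift g) = ⊥ := by
      rw [hW]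
      exact (map_dS_eq_bot_iff (FreeGroup.lift g) hcG).mpr
        (by rw [FreeGroup.range_lift_eq_closure]; exact hsolv)
    have hmem : FreeGroup.lift g w ∈ W.map (FreeGroup.lift g) :=
      Subgroup.mem_map_of_mem _ hwW
    rw [hbot] at hmem
    exact Subgroup.mem_bot.mp hmem
end
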